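/- Let M be a nontrivial cut of G containing an edge x_1x_2. Then there is no 3-cutset of G containing both x_1 and x_2. -/

import Mathlib

namespace Paper

variable {V : Type*}

/-- `S ⊆ V(G)` is a cutset of `G`: the graph `G − S` is disconnected. -/
def IsCutset (G : SimpleGraph V) (S : Set V) : Prop :=
  ¬ (G.induce (Sᶜ : Set V)).Connected

/-- A 3-cutset: a cutset of exactly 3 vertices. -/
def IsThreeCutset (G : SimpleGraph V) (S : Set V) : Prop :=
  S.ncard = 3 ∧ IsCutset G S

/-- `G` is triconnected: at least 4 vertices and deleting any at most 2 vertices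
leaves a connected graph. -/
def IsTriconnected [Fintype V] (G : SimpleGraph V) : Prop :=
  4 ≤ Fintype.card V ∧
    ∀ X : Set V, X.ncard ≤ 2 → (G.induce (Xᶜ : Set V)).Connected

/-- `x` and `y` both survive the deletion of `R` and lie in the same connected
component of `G − R`. -/
def ReachOutside (G : SimpleGraph V) (R : Set V) (x y : V) : Prop :=
  ∃ (hx : x ∈ (Rᶜ : Set V)) (hy : y ∈ (Rᶜ : Set V)),
    (G.induce (Rᶜ : Set V)).Reachable ⟨x, hx⟩ ⟨y, hy⟩

/-- `R` splits `X`: two vertices of `X \ R` lie in different connected components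
of `G − R`. -/
def Splits (G : SimpleGraph V) (R X : Set V) : Prop :=
  ∃ x ∈ X, ∃ y ∈ X, x ∉ R ∧ y ∉ R ∧ ¬ ReachOutside G R x y

/-- Two 3-cutsets are dependent iff one splits the other. -/
def Dependent (G : SimpleGraph V) (S T : Set V) : Prop :=
  Splits G S T ∨ Splits G T S

/-- The connected component of `G − R` containing `u` (empty if `u ∈ R`). -/
def compOutside (G : SimpleGraph V) (R : Set V) (u : V) : Set V :=
  {y | ReachOutside G R u y}

/-- `C` is a connected component of `G − R`. -/
def IsCompOutside (G : SimpleGraph V) (R : Set V) (C : Set V) : Prop :=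
  ∃ u, u ∉ R ∧ C = compOutside G R u

/-- The graph obtained from `G` by deleting the vertices of `A` (with all incident
edges) and the edges of `E`. -/
def DelVE (G : SimpleGraph V) (A : Set V) (E : Set (Sym2 V)) : SimpleGraph (Aᶜ : Set V) :=
  (G.deleteEdges E).induce (Aᶜ : Set V)

/-- The mixed set of vertices `A` and edges `E` disconnects `G`. -/
def CutVE (G : SimpleGraph V) (A : Set V) (E : Set (Sym2 V)) : Prop :=
  ¬ (DelVE G A E).Connected

/-- `x` and `y` survive the deletion and lie in the same connected component of
the graph obtained by deleting the vertices of `A` and the edges of `E`. -/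
def ReachVE (G : SimpleGraph V) (A : Set V) (E : Set (Sym2 V)) (x y : V) : Prop :=
  ∃ (hx : x ∈ (Aᶜ : Set V)) (hy : y ∈ (Aᶜ : Set V)),
    (DelVE G A E).Reachable ⟨x, hx⟩ ⟨y, hy⟩

/-- The connected component of `G − (A ∪ E)` containing `u`. -/
def compVE (G : SimpleGraph V) (A : Set V) (E : Set (Sym2 V)) (u : V) : Set V :=
  {y | ReachVE G A E u y}

/-- `C` is a connected component of the graph obtained from `G` by deleting the
vertices of `A` and the edges of `E`. -/
def IsCompVE (G : SimpleGraph V) (A : Set V) (E : Set (Sym2 V)) (C : Set V) : Prop :=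
  ∃ u, u ∉ A ∧ C = compVE G A E u

section lemmas

section infra

variable {G : SimpleGraph V} {A R : Set V} {E : Set (Sym2 V)}

lemma delVE_adj {a b : (Aᶜ : Set V)} :
    (DelVE G A E).Adj a b ↔ G.Adj a b ∧ s((a : V), (b : V)) ∉ E := by
  simp [DelVE]

lemma reachVE_refl {u : V} (hu : u ∉ A) : ReachVE G A E u u :=
  ⟨hu, hu, SimpleGraph.Reachable.refl _⟩

lemma ReachVE.notmem_left {u v : V} (h : ReachVE G A E u v) : u ∉ A := h.1

lemma ReachVE.notmem_right {u v : V} (h : ReachVE G A E u v) : v ∉ A := h.2.1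

lemma ReachVE.symm {u v : V} (h : ReachVE G A E u v) : ReachVE G A E v u := by
  obtain ⟨hu, hv, hr⟩ := h
  exact ⟨hv, hu, hr.symm⟩

lemma ReachVE.trans {u v w : V} (h : ReachVE G A E u v) (h' : ReachVE G A E v w) :
    ReachVE G A E u w := by
  obtain ⟨hu, hv, hr⟩ := h
  obtain ⟨hv', hw, hr'⟩ := h'
  exact ⟨hu, hw, hr.trans hr'⟩

lemma reachVE_adj {u v : V} (h : G.Adj u v) (hu : u ∉ A) (hv : v ∉ A)
    (he : s(u, v) ∉ E) : ReachVE G A E u v := by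
  refine ⟨hu, hv, SimpleGraph.Adj.reachable ?_⟩
  exact delVE_adj.mpr ⟨h, he⟩

lemma reachVE_ind {P : V → Prop}
    (hstep : ∀ u v, G.Adj u v → u ∉ A → v ∉ A → s(u, v) ∉ E → P u → P v)
    {x y : V} (h : ReachVE G A E x y) (hx : P x) : P y := by
  obtain ⟨hx', hy', hr⟩ := h
  have key : ∀ (a b : (Aᶜ : Set V)), (DelVE G A E).Reachable a b → P a → P b := by
    intro a b hab
    obtain ⟨w⟩ := hab
    induction w with
    | nil => exact id
    | @cons p q r hadj _ ih =>
      intro pa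
      have := delVE_adj.mp hadj
      exact ih (hstep _ _ this.1 p.2 q.2 this.2 pa)
  exact key _ _ hr hx

lemma reachOutside_iff {x y : V} : ReachOutside G R x y ↔ ReachVE G R ∅ x y := by
  have hg : DelVE G R (∅ : Set (Sym2 V)) = G.induce (Rᶜ : Set V) := by
    unfold DelVE
    rw [SimpleGraph.deleteEdges_empty]
  unfold ReachOutside ReachVE
  rw [hg]

lemma reachOutside_refl {u : V} (hu : u ∉ R) : ReachOutside G R u u :=
  reachOutside_iff.mpr (reachVE_refl hu)

lemma ReachOutside.notmem_left {u v : V} (h : ReachOutside G R u v) : u ∉ R := h.1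

lemma ReachOutside.notmem_right {u v : V} (h : ReachOutside G R u v) : v ∉ R := h.2.1

lemma ReachOutside.symm {u v : V} (h : ReachOutside G R u v) : ReachOutside G R v u :=
  reachOutside_iff.mpr (reachOutside_iff.mp h).symm

lemma ReachOutside.trans {u v w : V} (h : ReachOutside G R u v) (h' : ReachOutside G R v w) :
    ReachOutside G R u w :=
  reachOutside_iff.mpr ((reachOutside_iff.mp h).trans (reachOutside_iff.mp h'))

lemma reachOutside_adj {u v : V} (h : G.Adj u v) (hu : u ∉ R) (hv : v ∉ R) :
    ReachOutside G R u v :=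
  reachOutside_iff.mpr (reachVE_adj h hu hv (Set.notMem_empty _))

lemma reachOutside_ind {P : V → Prop}
    (hstep : ∀ u v, G.Adj u v → u ∉ R → v ∉ R → P u → P v)
    {x y : V} (h : ReachOutside G R x y) (hx : P x) : P y :=
  reachVE_ind (fun u v ha hu hv _ pu => hstep u v ha hu hv pu) (reachOutside_iff.mp h) hx

end infra

/-- A vertex of a mixed element: either the vertex itself, or an endpoint of the edge. -/
def mvert : V ⊕ Sym2 V → V → Prop
  | .inl a, w => w = a
  | .inr f, w => w ∈ f

/-- The mixed element `m` kills the (directed) edge `u→v`. -/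
def mkill : V ⊕ Sym2 V → V → V → Prop
  | .inl a, _, v => v = a
  | .inr f, u, v => f = s(u, v)

/-- Pick the unique "exit vertex" of a mixed element relative to a set `Dset`. -/
lemma pick_out {Dset : Set V} (m : V ⊕ Sym2 V) (hA : ∀ a, m = .inl a → a ∉ Dset)
    (fb : V) (hfb : fb ∉ Dset) :
    ∃ ω, ω ∉ Dset ∧ ∀ u v, u ∈ Dset → v ∉ Dset → mkill m u v → v = ω := by
  cases m with
  | inl a =>
    exact ⟨a, hA a rfl, fun u v _ _ h => h⟩
  | inr f =>
    induction f with
    | _ c d =>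
      by_cases hc : c ∈ Dset
      · by_cases hd : d ∈ Dset
        · refine ⟨fb, hfb, fun u v hu hv hk => ?_⟩
          rcases Sym2.eq_iff.mp hk with ⟨hcu, hdv⟩ | ⟨hcv, hdu⟩
          · exact absurd (hdv ▸ hd) hv
          · exact absurd (hcv ▸ hc) hv
        · refine ⟨d, hd, fun u v hu hv hk => ?_⟩
          rcases Sym2.eq_iff.mp hk with ⟨hcu, hdv⟩ | ⟨hcv, hdu⟩
          · exact hdv.symm
          · exact absurd (hdu ▸ hu) hd
      · refine ⟨c, hc, fun u v hu hv hk => ?_⟩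
        rcases Sym2.eq_iff.mp hk with ⟨hcu, hdv⟩ | ⟨hcv, hdu⟩
        · exact absurd (hcu ▸ hu) hc
        · exact hcv.symm

section sep
variable [Fintype V] {G : SimpleGraph V}

/-- The key separation lemma: a set `C` closed under adjacency avoiding two vertices
`r₁, r₂` cannot have both inhabitants and outsiders (other than `r₁,r₂`) in a
triconnected graph. -/
lemma no_small_sep (htri : IsTriconnected G) {C : Set V} {r₁ r₂ b y : V}
    (hb : b ∈ C) (hb1 : b ≠ r₁) (hb2 : b ≠ r₂)
    (hy : y ∉ C) (hy1 : y ≠ r₁) (hy2 : y ≠ r₂)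
    (closed : ∀ u v, u ∈ C → G.Adj u v → v ≠ r₁ → v ≠ r₂ → v ∈ C) : False := by
  set R : Set V := {r₁, r₂} with hR
  have hRcard : R.ncard ≤ 2 := by
    apply le_trans (Set.ncard_insert_le _ _)
    simp
  have hconn := htri.2 R hRcard
  have hbR : b ∈ (Rᶜ : Set V) := by simp [hR, hb1, hb2]
  have hyR : y ∈ (Rᶜ : Set V) := by simp [hR, hy1, hy2]
  have hreach : ReachOutside G R b y := ⟨hbR, hyR, hconn.preconnected _ _⟩
  have : y ∈ C := by
    refine reachOutside_ind (P := fun v => v ∈ C) ?_ hreach hb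
    intro u v hadj hu hv huC
    simp only [hR, Set.mem_insert_iff, Set.mem_singleton_iff, not_or] at hv
    exact closed u v huC hadj hv.1 hv.2
  exact hy this

/-- In a triconnected graph, given a cutset `S` and two separated vertices `k, y`,
every vertex of `S` has a neighbour in the component of `k`. -/
lemma cutset_nbr (htri : IsTriconnected G) {S : Set V} (hS3 : S.ncard = 3)
    {s k y : V} (hs : s ∈ S) (hk : k ∉ S) (hy : y ∉ S)
    (hky : ¬ ReachOutside G S k y) : ∃ u, G.Adj s u ∧ ReachOutside G S k u := by
  by_contra hno
  push_neg at hno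
  set R : Set V := S \ {s} with hR
  have hRcard : R.ncard ≤ 2 := by
    have : R.ncard = S.ncard - 1 := Set.ncard_diff_singleton_of_mem hs
    omega
  have hconn := htri.2 R hRcard
  have hkR : k ∈ (Rᶜ : Set V) := by simp [hR]; intro h; exact absurd h hk
  have hyR : y ∈ (Rᶜ : Set V) := by simp [hR]; intro h; exact absurd h hy
  have hreach : ReachOutside G R k y := ⟨hkR, hyR, hconn.preconnected _ _⟩
  have : ReachOutside G S k y := by
    refine reachOutside_ind (P := fun v => ReachOutside G S k v) ?_ hreach
      (reachOutside_refl hk)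
    intro u v hadj hu hv hP
    have huS : u ∉ S := hP.2.1
    by_cases hvS : v ∈ S
    · have : v = s := by
        by_contra hne
        exact hv (by simp [hR, hvS, hne])
      exact absurd hP (hno u ((this ▸ hadj).symm))
    · exact hP.trans (reachOutside_adj hadj huS hvS)
  exact hky this

end sep

lemma cut_witness [Fintype V] {G : SimpleGraph V} {A : Set V} {E : Set (Sym2 V)}
    (hA : A.ncard < Fintype.card V) (hcut : CutVE G A E) :
    ∃ p q, p ∉ A ∧ q ∉ A ∧ ¬ ReachVE G A E p q := by
  have hne : ∃ v, v ∉ A := by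
    by_contra h; push_neg at h
    have : A = Set.univ := Set.eq_univ_of_forall h
    rw [this, Set.ncard_univ, Nat.card_eq_fintype_card] at hA; omega
  obtain ⟨v, hv⟩ := hne
  have hnonempty : Nonempty (Aᶜ : Set V) := ⟨⟨v, hv⟩⟩
  have hnp : ¬ (DelVE G A E).Preconnected := fun hp =>
    hcut ((SimpleGraph.connected_iff _).mpr ⟨hp, hnonempty⟩)
  unfold SimpleGraph.Preconnected at hnp
  push_neg at hnp
  obtain ⟨p, q, h⟩ := hnp
  exact ⟨p, q, p.2, q.2, fun ⟨h1, h2, hr⟩ => h hr⟩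

lemma nontriv_witness {G : SimpleGraph V} {A : Set V} {E : Set (Sym2 V)}
    (hnt : ∀ v : V, ¬ IsCompVE G A E {v}) {u : V} (hu : u ∉ A) :
    ∃ w, w ≠ u ∧ ReachVE G A E u w := by
  by_contra h; push_neg at h
  apply hnt u
  refine ⟨u, hu, ?_⟩
  ext y
  simp only [Set.mem_singleton_iff, compVE, Set.mem_setOf_eq]
  constructor
  · rintro rfl; exact reachVE_refl hu
  · intro hr
    by_contra hne
    exact h y hne hr

/-- The case where an endpoint of the distinguished edge lies in `A`. -/
lemma caseA [Fintype V] {G : SimpleGraph V} (htri : IsTriconnected G)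
    {A : Set V} {E : Set (Sym2 V)}
    (hcard : A.ncard + E.ncard = 3) {x y : V} (he₀ : s(x, y) ∈ E)
    (hxA : x ∈ A)
    (hwit : ∃ p q, p ∉ A ∧ q ∉ A ∧ ¬ ReachVE G A E p q)
    (hnt : ∀ u, u ∉ A → ∃ w, w ≠ u ∧ ReachVE G A E u w) : False := by
  obtain ⟨p, q, hpA, hqA, hpq⟩ := hwit
  have hpq' : p ≠ q := by
    rintro rfl; exact hpq (reachVE_refl hpA)
  have hAfin : A.Finite := Set.toFinite A
  have hEfin : E.Finite := Set.toFinite E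
  have hA1 : 1 ≤ A.ncard := (Set.ncard_pos hAfin).mpr ⟨x, hxA⟩
  have hE1 : 1 ≤ E.ncard := (Set.ncard_pos hEfin).mpr ⟨_, he₀⟩
  -- helper : transfer reachability avoiding a set R ⊇ all "kill locations" to ReachVE
  have transfer : ∀ (R : Set V), A ⊆ R →
      (∀ u v, s(u, v) ∈ E → u ∈ R ∨ v ∈ R) →
      ∀ p' q', p' ∉ R → q' ∉ R → ReachOutside G R p' q' → ReachVE G A E p' q' := by
    intro R hAR hER p' q' hp' hq' hreach
    refine reachOutside_ind (P := fun v => ReachVE G A E p' v) ?_ hreach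
      (reachVE_refl (fun h => hp' (hAR h)))
    intro u v hadj huR hvR hP
    refine hP.trans (reachVE_adj hadj (fun h => huR (hAR h)) (fun h => hvR (hAR h)) ?_)
    intro hE
    rcases hER u v hE with h | h
    · exact huR h
    · exact hvR h
  -- E.ncard is 1 or 2 since A is nonempty
  rcases (by omega : E.ncard = 1 ∨ E.ncard = 2) with hEn | hEn
  · -- E = {s(x,y)}, A.ncard = 2
    obtain ⟨g, hg⟩ := Set.ncard_eq_one.mp hEn
    have hgE : s(x, y) = g := by
      have := he₀; rw [hg] at this; simpa using this
    have hconn := htri.2 A (by omega)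
    have hreach : ReachOutside G A p q :=
      ⟨hpA, hqA, hconn.preconnected _ _⟩
    refine hpq (transfer A (subset_refl A) ?_ p q hpA hqA hreach)
    intro u v huv
    rw [hg] at huv
    have : s(u, v) = s(x, y) := by rw [Set.mem_singleton_iff.mp huv, hgE]
    rcases Sym2.eq_iff.mp this with ⟨h1, -⟩ | ⟨-, h2⟩
    · exact Or.inl (h1 ▸ hxA)
    · exact Or.inr (h2 ▸ hxA)
  · -- A = {x}, E = {s(x,y), f}
    have hAn : A.ncard = 1 := by omega
    obtain ⟨a, hA⟩ := Set.ncard_eq_one.mp hAn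
    have hax : a = x := by
      have := hxA; rw [hA] at this; simpa using this.symm
    have hAx : A = {x} := by rw [hA, hax]
    have hdiff : (E \ {s(x, y)}).ncard = 1 := by
      rw [Set.ncard_diff_singleton_of_mem he₀]; omega
    obtain ⟨f, hf⟩ := Set.ncard_eq_one.mp hdiff
    have hfE : f ∈ E ∧ f ≠ s(x, y) := by
      have : f ∈ E \ {s(x, y)} := by rw [hf]; rfl
      exact ⟨this.1, this.2⟩
    obtain ⟨⟨c, d⟩, hcd⟩ := Quot.exists_rep f
    have hcdE : s(c, d) = f := hcd
    -- the blocking set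
    set R : Set V := {x, c} with hR
    have hRA : A ⊆ R := by rw [hAx, hR]; intro v hv; exact Or.inl hv
    have hRcard : R.ncard ≤ 2 := le_trans (Set.ncard_insert_le _ _) (by simp)
    have hER : ∀ u v, s(u, v) ∈ E → u ∈ R ∨ v ∈ R := by
      intro u v huv
      by_cases h : s(u, v) = s(x, y)
      · rcases Sym2.eq_iff.mp h with ⟨h1, -⟩ | ⟨-, h2⟩
        · exact Or.inl (by rw [hR, ← h1]; exact Or.inl rfl)
        · exact Or.inr (by rw [hR, ← h2]; exact Or.inl rfl)
      · have : s(u, v) = f := by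
          have : s(u, v) ∈ E \ {s(x, y)} := ⟨huv, h⟩
          rw [hf] at this; simpa using this
        rw [← hcdE] at this
        rcases Sym2.eq_iff.mp this with ⟨h1, -⟩ | ⟨-, h2⟩
        · exact Or.inl (by rw [hR, h1]; exact Or.inr rfl)
        · exact Or.inr (by rw [hR, h2]; exact Or.inr rfl)
    -- massage witnesses to avoid c
    have key : ∀ p' q', p' ∉ A → q' ∉ A → p' ≠ c → q' ≠ c →
        ¬ ReachVE G A E p' q' → False := by
      intro p' q' hp' hq' hpc hqc hnr
      have hp'R : p' ∉ R := by
        rw [hR]; rintro (h | h)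
        · exact hp' (by rw [hAx]; exact h)
        · exact hpc h
      have hq'R : q' ∉ R := by
        rw [hR]; rintro (h | h)
        · exact hq' (by rw [hAx]; exact h)
        · exact hqc h
      have hconn := htri.2 R hRcard
      exact hnr (transfer R hRA hER p' q' hp'R hq'R
        ⟨hp'R, hq'R, hconn.preconnected _ _⟩)
    by_cases hpc : p = c
    · obtain ⟨w, hwp, hw⟩ := hnt p hpA
      have hwq : ¬ ReachVE G A E w q := fun h => hpq (hw.trans h)
      have hwc : w ≠ c := hpc ▸ hwp
      have hqc : q ≠ c := hpc ▸ hpq'.symm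
      exact key w q hw.symm.notmem_left hqA hwc hqc hwq
    · by_cases hqc : q = c
      · obtain ⟨w, hwq, hw⟩ := hnt q hqA
        have hpw : ¬ ReachVE G A E p w := fun h => hpq (h.trans hw.symm)
        have hwc : w ≠ c := hqc ▸ hwq
        exact key p w hpA hw.symm.notmem_left hpc hwc hpw
      · exact key p q hpA hqA hpc hqc hpq

/-- Every surviving vertex is on the side of `x₁` or of `x₂` in `G - M`. -/
lemma lemD [Fintype V] {G : SimpleGraph V} (htri : IsTriconnected G)
    {A : Set V} {E : Set (Sym2 V)} {x₁ x₂ : V} {m₁ m₂ : V ⊕ Sym2 V}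
    (h12 : x₁ ≠ x₂)
    (hx1A : x₁ ∉ A) (he₀ : s(x₁, x₂) ∈ E)
    (Hv₁ : ∀ a, m₁ = .inl a → a ∈ A) (Hv₂ : ∀ a, m₂ = .inl a → a ∈ A)
    (HA : ∀ a ∈ A, m₁ = .inl a ∨ m₂ = .inl a)
    (HE : ∀ f ∈ E, f = s(x₁, x₂) ∨ m₁ = .inr f ∨ m₂ = .inr f)
    (hnt : ∀ u, u ∉ A → ∃ w, w ≠ u ∧ ReachVE G A E u w)
    {d : V} (hdA : d ∉ A) : ReachVE G A E d x₁ ∨ ReachVE G A E d x₂ := by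
  by_contra hcon
  push_neg at hcon
  obtain ⟨h1, h2⟩ := hcon
  set Dset : Set V := {v | ReachVE G A E d v} with hDdef
  have hsub : ∀ v ∈ Dset, v ∉ A := fun v hv => ReachVE.notmem_right hv
  have hx1D : x₁ ∉ Dset := h1
  have hx2D : x₂ ∉ Dset := h2
  obtain ⟨ω₁, hω₁, hcov₁⟩ :=
    pick_out m₁ (fun a ha hmem => hsub a hmem (Hv₁ a ha)) x₁ hx1D
  obtain ⟨ω₂, hω₂, hcov₂⟩ :=
    pick_out m₂ (fun a ha hmem => hsub a hmem (Hv₂ a ha)) x₁ hx1D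
  have hdD : d ∈ Dset := reachVE_refl hdA
  have hclosed : ∀ u v, u ∈ Dset → G.Adj u v → v ≠ ω₁ → v ≠ ω₂ → v ∈ Dset := by
    intro u v hu hadj hv1 hv2
    by_cases hvD : v ∈ Dset
    · exact hvD
    exfalso
    have huA : u ∉ A := hsub u hu
    by_cases hvA : v ∈ A
    · rcases HA v hvA with hm | hm
      · exact hv1 (hcov₁ u v hu hvD (by rw [hm]; rfl))
      · exact hv2 (hcov₂ u v hu hvD (by rw [hm]; rfl))
    · by_cases hE : s(u, v) ∈ E
      · rcases HE _ hE with h | h | h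
        · rcases Sym2.eq_iff.mp h with ⟨hu1, -⟩ | ⟨hu1, -⟩
          · exact h1 (hu1 ▸ hu)
          · exact h2 (hu1 ▸ hu)
        · exact hv1 (hcov₁ u v hu hvD (by rw [h]; rfl))
        · exact hv2 (hcov₂ u v hu hvD (by rw [h]; rfl))
      · exact hvD (ReachVE.trans hu (reachVE_adj hadj huA hvA hE))
  by_cases hy : ∃ y, y ∉ Dset ∧ y ≠ ω₁ ∧ y ≠ ω₂
  · obtain ⟨y, hyD, hy1, hy2⟩ := hy
    exact no_small_sep htri hdD (fun h => hω₁ (by rw [← h]; exact hdD)) (fun h => hω₂ (by rw [← h]; exact hdD))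
      hyD hy1 hy2 hclosed
  · push_neg at hy
    have hy' : ∀ y, y ∉ Dset → y = ω₁ ∨ y = ω₂ :=
      fun y h => or_iff_not_imp_left.mpr (hy y h)
    have hset : ∀ y, y ∉ Dset → y = x₁ ∨ y = x₂ := by
      intro y hyD
      have hx1' := hy' x₁ hx1D
      have hx2' := hy' x₂ hx2D
      have hw' := hy' y hyD
      rcases hw' with h'' | h''
      · rcases hx1' with h | h
        · exact Or.inl (h''.trans h.symm)
        · rcases hx2' with h' | h'
          · exact Or.inr (h''.trans h'.symm)
          · exact absurd (h.trans h'.symm) h12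
      · rcases hx1' with h | h
        · rcases hx2' with h' | h'
          · exact absurd (h.trans h'.symm) h12
          · exact Or.inr (h''.trans h'.symm)
        · exact Or.inl (h''.trans h.symm)
    obtain ⟨w, hw, hw2⟩ := hnt x₁ hx1A
    have hwD : w ∉ Dset := fun hmem => h1 (ReachVE.trans hmem (ReachVE.symm hw2))
    have hwx2 : w = x₂ := by
      rcases hset w hwD with h | h
      · exact absurd h hw
      · exact h
    have hreach : ReachVE G A E x₁ x₂ := hwx2 ▸ hw2
    have hfin : x₂ = x₁ := by
      refine reachVE_ind (P := fun v => v = x₁) ?_ hreach rfl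
      intro u v hadj huA hvA hE hu
      subst hu
      exfalso
      by_cases hvD : v ∈ Dset
      · exact h1 (ReachVE.trans hvD (ReachVE.symm (reachVE_adj hadj huA hvA hE)))
      · rcases hset v hvD with h | h
        · exact G.irrefl (h ▸ hadj)
        · exact hE (h ▸ he₀)
    exact h12 hfin.symm

lemma core [Fintype V] {G : SimpleGraph V} (htri : IsTriconnected G)
    {A : Set V} {E : Set (Sym2 V)}
    {S : Set V} {x₁ x₂ z k₁ k₂ : V} {m₁ m₂ : V ⊕ Sym2 V}
    (hS : S = {x₁, x₂, z})
    (h12 : x₁ ≠ x₂) (hz1 : z ≠ x₁) (hz2 : z ≠ x₂)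
    (hx1A : x₁ ∉ A) (hx2A : x₂ ∉ A) (hzA : z ∉ A)
    (he₀ : s(x₁, x₂) ∈ E)
    (HA : ∀ a ∈ A, m₁ = .inl a ∨ m₂ = .inl a)
    (HE : ∀ f ∈ E, f = s(x₁, x₂) ∨ m₁ = .inr f ∨ m₂ = .inr f)
    (Hv₁ : ∀ a, m₁ = .inl a → a ∈ A) (Hv₂ : ∀ a, m₂ = .inl a → a ∈ A)
    (hsep : ¬ ReachOutside G S k₁ k₂)
    (hcls : ∀ v, v ∉ S → ReachOutside G S v k₁ ∨ ReachOutside G S v k₂)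
    (hm₁ : ∀ w, mvert m₁ w → w ∉ S → ReachOutside G S w k₁)
    (hm₂ : ∀ w, mvert m₂ w → w ∉ S → ReachOutside G S w k₂)
    (hnx : ¬ ReachVE G A E x₁ x₂)
    (hLemD : ∀ v, v ∉ A → ReachVE G A E v x₁ ∨ ReachVE G A E v x₂)
    (hzside : ReachVE G A E z x₁)
    (hd : ∃ dd, dd ≠ x₂ ∧ ReachVE G A E x₂ dd) : False := by
  have hx1S : x₁ ∈ S := by simp [hS]
  have hx2S : x₂ ∈ S := by simp [hS]
  have hzS : z ∈ S := by simp [hS]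
  have hAS : ∀ a ∈ A, a ∉ S := by
    intro a ha haS
    rw [hS] at haS
    rcases haS with rfl | rfl | rfl
    · exact hx1A ha
    · exact hx2A ha
    · exact hzA ha
  have hmemS : ∀ v, v ∈ S → v = x₁ ∨ v = x₂ ∨ v = z := by
    intro v hv; rw [hS] at hv; simpa using hv
  have hzx2 : ¬ ReachVE G A E z x₂ := fun h => hnx ((ReachVE.symm hzside).trans h)
  -- Step Q : the component of k₁ contains no vertex of the x₂-side.
  have hQ : ∀ v, ReachOutside G S v k₁ → ¬ ReachVE G A E v x₂ := by
    intro q hρq hμq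
    set Qset : Set V := {v | ReachOutside G S v k₁ ∧ ReachVE G A E v x₂} with hQdef
    have hQS : ∀ v ∈ Qset, v ∉ S := fun v hv => hv.1.notmem_left
    have hQA : ∀ v ∈ Qset, v ∉ A := fun v hv => hv.2.notmem_left
    have hx1Q : x₁ ∉ Qset := fun h => hQS x₁ h hx1S
    have hx2Q : x₂ ∉ Qset := fun h => hQS x₂ h hx2S
    have hzQ : z ∉ Qset := fun h => hQS z h hzS
    obtain ⟨ω, hω, hcov⟩ :=
      pick_out m₁ (fun a ha hmem => hQA a hmem (Hv₁ a ha)) x₁ hx1Q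
    have hclosed : ∀ u v, u ∈ Qset → G.Adj u v → v ≠ x₂ → v ≠ ω → v ∈ Qset := by
      intro u v hu hadj hvx2 hvω
      obtain ⟨hρu, hμu⟩ := hu
      have huS : u ∉ S := hρu.notmem_left
      have huA : u ∉ A := hμu.notmem_left
      by_cases hvQ : v ∈ Qset
      · exact hvQ
      exfalso
      by_cases hvA : v ∈ A
      · rcases HA v hvA with hm | hm
        · exact hvω (hcov u v ⟨hρu, hμu⟩ hvQ (by rw [hm]; rfl))
        · have hvS : v ∉ S := hAS v hvA
          have hρv : ReachOutside G S v k₂ := hm₂ v (by rw [hm]; rfl) hvS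
          have hρuv : ReachOutside G S u v := reachOutside_adj hadj huS hvS
          exact hsep (((hρu.symm).trans hρuv).trans hρv)
      · have hdead : s(u, v) ∈ E := by
          by_contra hE
          have hμuv := reachVE_adj hadj huA hvA hE
          by_cases hvS : v ∈ S
          · rcases hmemS v hvS with rfl | rfl | rfl
            · exact hnx ((hμuv.symm).trans hμu)
            · exact hvx2 rfl
            · exact hzx2 ((hμuv.symm).trans hμu)
          · by_cases hμv : ReachVE G A E v x₂
            · have hρv : ¬ ReachOutside G S v k₁ := fun hr => hvQ ⟨hr, hμv⟩
              rcases hcls v hvS with h | h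
              · exact hρv h
              · exact hsep ((hρu.symm.trans (reachOutside_adj hadj huS hvS)).trans h)
            · exact hμv ((hμuv.symm).trans hμu)
        rcases HE _ hdead with h | h | h
        · rcases Sym2.eq_iff.mp h with ⟨hu1, -⟩ | ⟨hu1, -⟩
          · exact huS (hu1 ▸ hx1S)
          · exact huS (hu1 ▸ hx2S)
        · exact hvω (hcov u v ⟨hρu, hμu⟩ hvQ (by rw [h]; rfl))
        · have hρu2 : ReachOutside G S u k₂ :=
            hm₂ u (by rw [h]; exact Sym2.mem_mk_left u v) huS
          exact hsep ((hρu.symm).trans hρu2)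
    have hqQ : q ∈ Qset := ⟨hρq, hμq⟩
    have hq2 : q ≠ x₂ := fun h => hQS q hqQ (h ▸ hx2S)
    have hqω : q ≠ ω := fun h => hω (h ▸ hqQ)
    by_cases hx1ω : x₁ = ω
    · exact no_small_sep htri hqQ hq2 hqω hzQ hz2 (hx1ω ▸ hz1) hclosed
    · exact no_small_sep htri hqQ hq2 hqω hx1Q h12 hx1ω hclosed
  -- Step 11 : the x₂-side is contained in {x₂} ∪ (component of k₂).
  have hD2 : ∀ v, ReachVE G A E v x₂ → v = x₂ ∨ ReachOutside G S v k₂ := by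
    intro v hv
    by_cases hvS : v ∈ S
    · rcases hmemS v hvS with rfl | rfl | rfl
      · exact absurd hv hnx
      · exact Or.inl rfl
      · exact absurd hv hzx2
    · rcases hcls v hvS with h | h
      · exact absurd hv (hQ v h)
      · exact Or.inr h
  -- Step T : final contradiction.
  obtain ⟨dd, hdd_ne, hdd⟩ := hd
  set Tset : Set V := {v | ReachVE G A E v x₂ ∧ v ≠ x₂} with hTdef
  have hTA : ∀ v ∈ Tset, v ∉ A := fun v hv => hv.1.notmem_left
  have hTk₂ : ∀ v ∈ Tset, ReachOutside G S v k₂ := fun v hv =>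
    (hD2 v hv.1).resolve_left hv.2
  have hTS : ∀ v ∈ Tset, v ∉ S := fun v hv => (hTk₂ v hv).notmem_left
  have hddT : dd ∈ Tset := ⟨hdd.symm, hdd_ne⟩
  have hx1T : x₁ ∉ Tset := fun h => hnx h.1
  have hzT : z ∉ Tset := fun h => hzx2 h.1
  obtain ⟨ω, hω, hcov⟩ :=
    pick_out m₂ (fun a ha hmem => hTA a hmem (Hv₂ a ha)) x₁ hx1T
  have hclosed : ∀ u v, u ∈ Tset → G.Adj u v → v ≠ x₂ → v ≠ ω → v ∈ Tset := by
    intro u v hu hadj hvx2 hvω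
    have hμu := hu.1
    have hρu : ReachOutside G S u k₂ := hTk₂ u hu
    have huS : u ∉ S := hρu.notmem_left
    have huA : u ∉ A := hμu.notmem_left
    by_cases hvT : v ∈ Tset
    · exact hvT
    exfalso
    by_cases hvA : v ∈ A
    · rcases HA v hvA with hm | hm
      · have hvS : v ∉ S := hAS v hvA
        have hρv : ReachOutside G S v k₁ := hm₁ v (by rw [hm]; rfl) hvS
        have hρuv : ReachOutside G S u v := reachOutside_adj hadj huS hvS
        exact hsep ((hρv.symm.trans hρuv.symm).trans hρu)
      · exact hvω (hcov u v hu hvT (by rw [hm]; rfl))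
    · by_cases hμv : ReachVE G A E v x₂
      · exact hvT ⟨hμv, hvx2⟩
      · have hdead : s(u, v) ∈ E := by
          by_contra hE
          exact hμv (((reachVE_adj hadj huA hvA hE).symm).trans hμu)
        rcases HE _ hdead with h | h | h
        · rcases Sym2.eq_iff.mp h with ⟨hu1, -⟩ | ⟨hu1, -⟩
          · exact hnx (hu1 ▸ hμu)
          · exact hu.2 hu1
        · have hρu1 : ReachOutside G S u k₁ :=
            hm₁ u (by rw [h]; exact Sym2.mem_mk_left u v) huS
          exact hsep ((hρu1.symm).trans hρu)
        · exact hvω (hcov u v hu hvT (by rw [h]; rfl))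
  have hdd2 : dd ≠ ω := fun h => hω (h ▸ hddT)
  by_cases hx1ω : x₁ = ω
  · exact no_small_sep htri hddT hdd_ne hdd2 hzT hz2 (hx1ω ▸ hz1) hclosed
  · exact no_small_sep htri hddT hdd_ne hdd2 hx1T h12 hx1ω hclosed

end lemmas

/-- Lemma `l31`: no 3-cutset contains both endpoints of an edge of a nontrivial
cut. -/
theorem stmt_14 [Fintype V] (G : SimpleGraph V)
    (htri : IsTriconnected G) (hbig : 6 < Fintype.card V)
    (A : Set V) (E : Set (Sym2 V))
    (hcard : A.ncard + E.ncard = 3) (hEsub : E ⊆ G.edgeSet)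
    (hEne : E.Nonempty) (hcut : CutVE G A E)
    (hnontriv : ∀ v : V, ¬ IsCompVE G A E {v})
    (x₁ x₂ : V) (hx : s(x₁, x₂) ∈ E) :
    ¬ ∃ S : Set V, IsThreeCutset G S ∧ x₁ ∈ S ∧ x₂ ∈ S := by
  rintro ⟨S, ⟨hS3, hScut⟩, hx1S, hx2S⟩
  have hAfin : A.Finite := Set.toFinite A
  have hEfin : E.Finite := Set.toFinite E
  have hSfin : S.Finite := Set.toFinite S
  have h12 : x₁ ≠ x₂ := (G.mem_edgeSet.mp (hEsub hx)).ne
  have hE1 : 1 ≤ E.ncard := (Set.ncard_pos hEfin).mpr ⟨_, hx⟩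
  have hAcard : A.ncard ≤ 2 := by omega
  -- basic witnesses
  have hwit : ∃ p q, p ∉ A ∧ q ∉ A ∧ ¬ ReachVE G A E p q :=
    cut_witness (by omega) hcut
  have hnt : ∀ u, u ∉ A → ∃ w, w ≠ u ∧ ReachVE G A E u w :=
    fun u hu => nontriv_witness hnontriv hu
  -- case where an endpoint of the edge lies in A
  by_cases hx1A : x₁ ∈ A
  · exact caseA htri hcard hx hx1A hwit hnt
  by_cases hx2A : x₂ ∈ A
  · exact caseA htri hcard (Sym2.eq_swap ▸ hx) hx2A hwit hnt
  -- extract the third vertex of S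
  obtain ⟨z, hzS, hz1, hz2, hSdef⟩ :
      ∃ z, z ∈ S ∧ z ≠ x₁ ∧ z ≠ x₂ ∧ S = {x₁, x₂, z} := by
    have hpairS : ({x₁, x₂} : Set V) ⊆ S := by
      intro v hv; rcases hv with rfl | hv
      · exact hx1S
      · exact (Set.mem_singleton_iff.mp hv) ▸ hx2S
    have hdiff : (S \ {x₁, x₂}).ncard = 1 := by
      rw [Set.ncard_diff hpairS, Set.ncard_pair h12, hS3]
    obtain ⟨z, hz⟩ := Set.ncard_eq_one.mp hdiff
    have hzmem : z ∈ S \ ({x₁, x₂} : Set V) := by rw [hz]; rfl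
    have hz1 : z ≠ x₁ := fun h => hzmem.2 (Or.inl h)
    have hz2 : z ≠ x₂ := fun h => hzmem.2 (Or.inr h)
    refine ⟨z, hzmem.1, hz1, hz2, ?_⟩
    have hsub : ({x₁, x₂, z} : Set V) ⊆ S := by
      intro v hv
      rcases hv with rfl | rfl | hv
      · exact hx1S
      · exact hx2S
      · exact (Set.mem_singleton_iff.mp hv) ▸ hzmem.1
    have hc3 : ({x₁, x₂, z} : Set V).ncard = 3 := by
      rw [Set.ncard_insert_of_notMem (by simp [h12, hz1.symm]) (Set.toFinite _),
        Set.ncard_insert_of_notMem (by simp [hz2.symm]) (Set.toFinite _),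
        Set.ncard_singleton]
    exact (Set.eq_of_subset_of_ncard_le hsub (by omega) hSfin).symm
  -- build the two extra elements
  obtain ⟨m₁, m₂, Hv₁, Hv₂, Hw₁, Hw₂, HA, HE⟩ :
      ∃ m₁ m₂ : V ⊕ Sym2 V,
        (∀ a, m₁ = .inl a → a ∈ A) ∧ (∀ a, m₂ = .inl a → a ∈ A) ∧
        (∀ f, m₁ = .inr f → f ∈ E) ∧ (∀ f, m₂ = .inr f → f ∈ E) ∧
        (∀ a ∈ A, m₁ = .inl a ∨ m₂ = .inl a) ∧
        (∀ f ∈ E, f = s(x₁, x₂) ∨ m₁ = .inr f ∨ m₂ = .inr f) := by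
    have hdiff : (E \ {s(x₁, x₂)}).ncard = E.ncard - 1 :=
      Set.ncard_diff_singleton_of_mem hx
    rcases (by omega : E.ncard = 1 ∨ E.ncard = 2 ∨ E.ncard = 3) with hEn | hEn | hEn
    · -- A = {a, b}
      obtain ⟨a, b, hab, hA⟩ := Set.ncard_eq_two.mp (by omega : A.ncard = 2)
      refine ⟨.inl a, .inl b, ?_, ?_, ?_, ?_, ?_, ?_⟩
      · intro a' h; cases h; rw [hA]; exact Or.inl rfl
      · intro a' h; cases h; rw [hA]; exact Or.inr rfl
      · intro f h; cases h
      · intro f h; cases h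
      · intro a' ha'; rw [hA] at ha'
        rcases ha' with rfl | ha'
        · exact Or.inl rfl
        · exact Or.inr (by rw [Set.mem_singleton_iff.mp ha'])
      · intro f hf
        have hE1' : E = {s(x₁, x₂)} := by
          obtain ⟨g, hg⟩ := Set.ncard_eq_one.mp hEn
          rw [hg]; rw [hg] at hx; simp at hx; rw [hx]
        rw [hE1'] at hf
        exact Or.inl (Set.mem_singleton_iff.mp hf)
    · -- A = {a}, E = {e₀, f₁}
      obtain ⟨a, hA⟩ := Set.ncard_eq_one.mp (by omega : A.ncard = 1)
      obtain ⟨f₁, hf₁⟩ := Set.ncard_eq_one.mp (by omega : (E \ {s(x₁, x₂)}).ncard = 1)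
      have hf₁E : f₁ ∈ E := by
        have : f₁ ∈ E \ {s(x₁, x₂)} := by rw [hf₁]; rfl
        exact this.1
      refine ⟨.inl a, .inr f₁, ?_, ?_, ?_, ?_, ?_, ?_⟩
      · intro a' h; cases h; rw [hA]; rfl
      · intro a' h; cases h
      · intro f h; cases h
      · intro f h; cases h; exact hf₁E
      · intro a' ha'; rw [hA] at ha'
        exact Or.inl (by rw [Set.mem_singleton_iff.mp ha'])
      · intro f hf
        by_cases h : f = s(x₁, x₂)
        · exact Or.inl h
        · have : f ∈ E \ {s(x₁, x₂)} := ⟨hf, h⟩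
          rw [hf₁] at this
          exact Or.inr (Or.inr (by rw [Set.mem_singleton_iff.mp this]))
    · -- A = ∅, E = {e₀, f₁, f₂}
      have hA : A = ∅ := by
        have : A.ncard = 0 := by omega
        exact (Set.ncard_eq_zero hAfin).mp this
      obtain ⟨f₁, f₂, hff, hf⟩ := Set.ncard_eq_two.mp
        (by omega : (E \ {s(x₁, x₂)}).ncard = 2)
      have hf₁E : f₁ ∈ E ∧ f₂ ∈ E := by
        constructor
        · have : f₁ ∈ E \ {s(x₁, x₂)} := by rw [hf]; exact Or.inl rfl
          exact this.1
        · have : f₂ ∈ E \ {s(x₁, x₂)} := by rw [hf]; exact Or.inr rfl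
          exact this.1
      refine ⟨.inr f₁, .inr f₂, ?_, ?_, ?_, ?_, ?_, ?_⟩
      · intro a' h; cases h
      · intro a' h; cases h
      · intro f h; cases h; exact hf₁E.1
      · intro f h; cases h; exact hf₁E.2
      · intro a' ha'; rw [hA] at ha'; cases ha'
      · intro f hfE
        by_cases h : f = s(x₁, x₂)
        · exact Or.inl h
        · have : f ∈ E \ {s(x₁, x₂)} := ⟨hfE, h⟩
          rw [hf] at this
          rcases this with rfl | hthis
          · exact Or.inr (Or.inl rfl)
          · exact Or.inr (Or.inr (by rw [Set.mem_singleton_iff.mp hthis]))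
  -- the two sides of G - M
  have hLD : ∀ v, v ∉ A → ReachVE G A E v x₁ ∨ ReachVE G A E v x₂ :=
    fun v hv => lemD htri h12 hx1A hx Hv₁ Hv₂ HA HE hnt hv
  have hnx : ¬ ReachVE G A E x₁ x₂ := by
    intro h
    obtain ⟨p, q, hpA, hqA, hpq⟩ := hwit
    have hside : ∀ u, u ∉ A → ReachVE G A E u x₂ := by
      intro u hu
      rcases hLD u hu with h' | h'
      · exact h'.trans h
      · exact h'
    exact hpq ((hside p hpA).trans (hside q hqA).symm)
  -- witnesses for the cutset S
  obtain ⟨k₀, y₀, hk₀S, hy₀S, hsep₀⟩ :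
      ∃ k y, k ∉ S ∧ y ∉ S ∧ ¬ ReachOutside G S k y := by
    have hcutS : CutVE G S ∅ := by
      unfold CutVE DelVE
      rw [SimpleGraph.deleteEdges_empty]
      exact hScut
    obtain ⟨p, q, hpS, hqS, hpq⟩ := cut_witness (by omega) hcutS
    exact ⟨p, q, hpS, hqS, fun h => hpq (reachOutside_iff.mp h)⟩
  -- every vertex of S has a neighbour in every component
  have hfact1 : ∀ s ∈ S, ∀ k, k ∉ S → ∃ u, G.Adj s u ∧ ReachOutside G S k u := by
    intro s hs k hk
    by_cases hkk : ReachOutside G S k k₀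
    · have hky : ¬ ReachOutside G S k y₀ := fun h => hsep₀ (hkk.symm.trans h)
      exact cutset_nbr htri hS3 hs hk hy₀S hky
    · exact cutset_nbr htri hS3 hs hk hk₀S hkk
  -- touching predicate
  have notA : ∀ (m : V ⊕ Sym2 V) k, (∀ a, m = .inl a → a ∈ A) →
      ¬ (∃ w, mvert m w ∧ w ∉ S ∧ ReachOutside G S w k) →
      ∀ w, w ∉ S → ReachOutside G S w k → (m = .inl w) → False := by
    intro m k _ htch w hwS hρ hm
    exact htch ⟨w, by rw [hm]; rfl, hwS, hρ⟩
  have htch : ∀ k, k ∉ S →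
      (∃ w, mvert m₁ w ∧ w ∉ S ∧ ReachOutside G S w k) ∨
      (∃ w, mvert m₂ w ∧ w ∉ S ∧ ReachOutside G S w k) := by
    intro k hk
    by_contra hcon
    obtain ⟨ht1, ht2⟩ := not_or.mp hcon
    have hnotA : ∀ w, w ∉ S → ReachOutside G S w k → w ∉ A := by
      intro w hwS hρ hwA
      rcases HA w hwA with hm | hm
      · exact ht1 ⟨w, by rw [hm]; rfl, hwS, hρ⟩
      · exact ht2 ⟨w, by rw [hm]; rfl, hwS, hρ⟩
    have hnotE : ∀ u v, u ∉ S → ReachOutside G S u k → s(u, v) ∈ E →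
        ({u, v} : Set V) = {x₁, x₂} ∨ False := by
      intro u v huS hρ hE
      exfalso
      rcases HE _ hE with h | h | h
      · rcases Sym2.eq_iff.mp h with ⟨h1, -⟩ | ⟨h1, -⟩
        · rw [h1] at huS; exact huS hx1S
        · rw [h1] at huS; exact huS hx2S
      · exact ht1 ⟨u, by rw [h]; exact Sym2.mem_mk_left u v, huS, hρ⟩
      · exact ht2 ⟨u, by rw [h]; exact Sym2.mem_mk_left u v, huS, hρ⟩
    obtain ⟨u, hux, hρku⟩ := hfact1 x₁ hx1S k hk
    obtain ⟨w, hwx, hρkw⟩ := hfact1 x₂ hx2S k hk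
    have huS : u ∉ S := hρku.notmem_right
    have hwS : w ∉ S := hρkw.notmem_right
    have huA : u ∉ A := hnotA u huS hρku.symm
    have hwA : w ∉ A := hnotA w hwS hρkw.symm
    have hμx1u : ReachVE G A E x₁ u := by
      refine reachVE_adj hux hx1A huA ?_
      intro hE
      rcases HE _ hE with h | h | h
      · rcases Sym2.eq_iff.mp h with ⟨-, h2⟩ | ⟨h1, -⟩
        · rw [h2] at huS; exact huS hx2S
        · exact h12 h1
      · exact ht1 ⟨u, by rw [h]; exact Sym2.mem_mk_right x₁ u, huS, hρku.symm⟩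
      · exact ht2 ⟨u, by rw [h]; exact Sym2.mem_mk_right x₁ u, huS, hρku.symm⟩
    have hμx2w : ReachVE G A E x₂ w := by
      refine reachVE_adj hwx hx2A hwA ?_
      intro hE
      rcases HE _ hE with h | h | h
      · rcases Sym2.eq_iff.mp h with ⟨h1, -⟩ | ⟨-, h2⟩
        · exact h12 h1.symm
        · rw [h2] at hwS; exact hwS hx1S
      · exact ht1 ⟨w, by rw [h]; exact Sym2.mem_mk_right x₂ w, hwS, hρkw.symm⟩
      · exact ht2 ⟨w, by rw [h]; exact Sym2.mem_mk_right x₂ w, hwS, hρkw.symm⟩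
    have hμuw : ReachVE G A E u w := by
      have hρuw : ReachOutside G S u w := hρku.symm.trans hρkw
      have key : ReachVE G A E u w ∧ ReachOutside G S k w := by
        refine reachOutside_ind
          (P := fun v => ReachVE G A E u v ∧ ReachOutside G S k v) ?_ hρuw
          ⟨reachVE_refl huA, hρku⟩
        intro a b hadj haS hbS hP
        obtain ⟨hμua, hρka⟩ := hP
        have hρkb : ReachOutside G S k b := hρka.trans (reachOutside_adj hadj haS hbS)
        have hbA : b ∉ A := hnotA b hbS hρkb.symm
        refine ⟨hμua.trans (reachVE_adj hadj hμua.notmem_right hbA ?_), hρkb⟩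
        intro hE
        rcases HE _ hE with h | h | h
        · rcases Sym2.eq_iff.mp h with ⟨h1, -⟩ | ⟨h1, -⟩
          · rw [h1] at haS; exact haS hx1S
          · rw [h1] at haS; exact haS hx2S
        · exact ht1 ⟨a, by rw [h]; exact Sym2.mem_mk_left a b, haS, hρka.symm⟩
        · exact ht2 ⟨a, by rw [h]; exact Sym2.mem_mk_left a b, haS, hρka.symm⟩
      exact key.1
    exact hnx (hμx1u.trans (hμuw.trans hμx2w.symm))
  -- a touched class is unique
  have vert_class : ∀ (m : V ⊕ Sym2 V), (∀ f, m = .inr f → f ∈ E) → ∀ k,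
      (∃ w, mvert m w ∧ w ∉ S ∧ ReachOutside G S w k) →
      ∀ w, mvert m w → w ∉ S → ReachOutside G S w k := by
    intro m hmE k hk w hw hwS
    obtain ⟨w₀, hw₀, hw₀S, hρ₀⟩ := hk
    cases m with
    | inl a =>
      have : w = w₀ := by
        have h1 : w = a := hw
        have h2 : w₀ = a := hw₀
        rw [h1, h2]
      exact this ▸ hρ₀
    | inr f =>
      by_cases hww : w = w₀
      · exact hww ▸ hρ₀
      · have hf : f = s(w, w₀) := (Sym2.mem_and_mem_iff hww).mp ⟨hw, hw₀⟩
        have hadj : G.Adj w w₀ := by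
          have := hEsub (hmE f rfl)
          rw [hf] at this
          exact G.mem_edgeSet.mp this
        exact (reachOutside_adj hadj hwS hw₀S).trans hρ₀
  have huniq : ∀ (m : V ⊕ Sym2 V), (∀ f, m = .inr f → f ∈ E) → ∀ k k',
      (∃ w, mvert m w ∧ w ∉ S ∧ ReachOutside G S w k) →
      (∃ w, mvert m w ∧ w ∉ S ∧ ReachOutside G S w k') →
      ReachOutside G S k k' := by
    intro m hmE k k' hk hk'
    obtain ⟨w, hw, hwS, hρ⟩ := hk'
    exact ((vert_class m hmE k hk w hw hwS).symm.trans hρ)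
  -- z is not in A
  have hzA : z ∉ A := by
    intro hzA
    rcases HA z hzA with hm | hm
    · rcases htch k₀ hk₀S with h | h
      · obtain ⟨w, hw, hwS, -⟩ := h
        rw [hm] at hw
        exact hwS ((hw : w = z) ▸ hzS)
      · rcases htch y₀ hy₀S with h' | h'
        · obtain ⟨w, hw, hwS, -⟩ := h'
          rw [hm] at hw
          exact hwS ((hw : w = z) ▸ hzS)
        · exact hsep₀ (huniq m₂ Hw₂ k₀ y₀ h h')
    · rcases htch k₀ hk₀S with h | h
      · rcases htch y₀ hy₀S with h' | h'
        · exact hsep₀ (huniq m₁ Hw₁ k₀ y₀ h h')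
        · obtain ⟨w, hw, hwS, -⟩ := h'
          rw [hm] at hw
          exact hwS ((hw : w = z) ▸ hzS)
      · obtain ⟨w, hw, hwS, -⟩ := h
        rw [hm] at hw
        exact hwS ((hw : w = z) ▸ hzS)
  -- assign the two elements to the two classes
  have hassign :
      ((∃ w, mvert m₁ w ∧ w ∉ S ∧ ReachOutside G S w k₀) ∧
       (∃ w, mvert m₂ w ∧ w ∉ S ∧ ReachOutside G S w y₀)) ∨
      ((∃ w, mvert m₂ w ∧ w ∉ S ∧ ReachOutside G S w k₀) ∧
       (∃ w, mvert m₁ w ∧ w ∉ S ∧ ReachOutside G S w y₀)) := by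
    rcases htch k₀ hk₀S with h | h <;> rcases htch y₀ hy₀S with h' | h'
    · exact absurd (huniq m₁ Hw₁ k₀ y₀ h h') hsep₀
    · exact Or.inl ⟨h, h'⟩
    · exact Or.inr ⟨h, h'⟩
    · exact absurd (huniq m₂ Hw₂ k₀ y₀ h h') hsep₀
  -- finish via core, with the right orientation
  have hd₂ : ∃ dd, dd ≠ x₂ ∧ ReachVE G A E x₂ dd := hnt x₂ hx2A
  have hd₁ : ∃ dd, dd ≠ x₁ ∧ ReachVE G A E x₁ dd := hnt x₁ hx1A
  have hS' : S = {x₂, x₁, z} := by rw [hSdef]; exact Set.insert_comm x₁ x₂ {z}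
  have hx' : s(x₂, x₁) ∈ E := Sym2.eq_swap ▸ hx
  have HE' : ∀ f ∈ E, f = s(x₂, x₁) ∨ m₁ = .inr f ∨ m₂ = .inr f := by
    intro f hf
    rcases HE f hf with h | h
    · exact Or.inl (by rw [h]; exact Sym2.eq_swap.symm)
    · exact Or.inr h
  have hnx' : ¬ ReachVE G A E x₂ x₁ := fun h => hnx h.symm
  have hLD' : ∀ v, v ∉ A → ReachVE G A E v x₂ ∨ ReachVE G A E v x₁ :=
    fun v hv => (hLD v hv).symm
  rcases hassign with ⟨ha₁, ha₂⟩ | ⟨ha₁, ha₂⟩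
  · -- m₁ ↔ k₀, m₂ ↔ y₀
    have hm₁' := vert_class m₁ Hw₁ k₀ ha₁
    have hm₂' := vert_class m₂ Hw₂ y₀ ha₂
    have hcls : ∀ v, v ∉ S → ReachOutside G S v k₀ ∨ ReachOutside G S v y₀ := by
      intro v hv
      rcases htch v hv with h | h
      · exact Or.inl (huniq m₁ Hw₁ v k₀ h ha₁)
      · exact Or.inr (huniq m₂ Hw₂ v y₀ h ha₂)
    rcases hLD z hzA with hz | hz
    · exact core htri hSdef h12 hz1 hz2 hx1A hx2A hzA hx HA HE Hv₁ Hv₂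
        hsep₀ hcls hm₁' hm₂' hnx hLD hz hd₂
    · exact core htri hS' h12.symm hz2 hz1 hx2A hx1A hzA hx' HA HE' Hv₁ Hv₂
        hsep₀ hcls hm₁' hm₂' hnx' hLD' hz hd₁
  · -- m₁ ↔ y₀, m₂ ↔ k₀
    have hm₂' := vert_class m₂ Hw₂ k₀ ha₁
    have hm₁' := vert_class m₁ Hw₁ y₀ ha₂
    have hsep' : ¬ ReachOutside G S y₀ k₀ := fun h => hsep₀ h.symm
    have hcls : ∀ v, v ∉ S → ReachOutside G S v y₀ ∨ ReachOutside G S v k₀ := by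
      intro v hv
      rcases htch v hv with h | h
      · exact Or.inl (huniq m₁ Hw₁ v y₀ h ha₂)
      · exact Or.inr (huniq m₂ Hw₂ v k₀ h ha₁)
    rcases hLD z hzA with hz | hz
    · exact core htri hSdef h12 hz1 hz2 hx1A hx2A hzA hx HA HE Hv₁ Hv₂
        hsep' hcls hm₁' hm₂' hnx hLD hz hd₂
    · exact core htri hS' h12.symm hz2 hz1 hx2A hx1A hzA hx' HA HE' Hv₁ Hv₂
        hsep' hcls hm₁' hm₂' hnx' hLD' hz hd₁

end Paper
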